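/- The Venn polytope τ^(F) has exactly 2^n vertices, namely the points (ζ^{(F,T)}, e^{(T)}) for T ⊆ [n], and these 2^n points are affinely independent; in particular the dimension of τ^(F) is 2^n − 1. -/

import Mathlib

open scoped Classical

/-- The Venn polytope has exactly the `2^n` points `(ζ^(F,T), e^(T))` as vertices
(extreme points), these are affinely independent, and its dimension is `2^n - 1`. -/
theorem stmt8 (n : ℕ) (F : Finset (Finset (Fin n))) (hF : F.Nonempty)
    (τ : Set (({S // S ∈ F} → ℚ) × (Finset (Fin n) → ℚ)))
    (hτ : τ = {p | (∑ T, p.2 T) = 1 ∧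
        (∀ S : {S // S ∈ F},
          ∑ T ∈ Finset.univ.filter (fun T : Finset (Fin n) => S.1 ⊆ T), p.2 T = p.1 S) ∧
        (∀ T, 0 ≤ p.2 T)})
    (v : Finset (Fin n) → ({S // S ∈ F} → ℚ) × (Finset (Fin n) → ℚ))
    (hv : ∀ T, v T = (fun S => if S.1 ⊆ T then 1 else 0, fun U => if U = T then 1 else 0)) :
    Set.extremePoints ℚ τ = Set.range v ∧
    AffineIndependent ℚ v ∧
    Module.finrank ℚ (vectorSpan ℚ τ) = 2 ^ n - 1 := by
  -- each v T lies in τ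
  have hvmem : ∀ T, v T ∈ τ := by
    intro T
    rw [hτ, hv]
    refine ⟨by simp, fun S => ?_, fun U => by positivity⟩
    simp [Finset.sum_ite_eq, Finset.mem_filter]
  -- τ is convex
  have hconvex : Convex ℚ τ := by
    rw [hτ]
    intro p hp q hq a b ha hb hab
    obtain ⟨hp1, hp2, hp3⟩ := hp
    obtain ⟨hq1, hq2, hq3⟩ := hq
    refine ⟨?_, fun S => ?_, fun U => ?_⟩
    · simp only [Prod.snd_add, Prod.smul_snd, Pi.add_apply, Pi.smul_apply, smul_eq_mul]
      rw [Finset.sum_add_distrib, ← Finset.mul_sum, ← Finset.mul_sum, hp1, hq1]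
      simpa using hab
    · simp only [Prod.snd_add, Prod.smul_snd, Prod.fst_add, Prod.smul_fst, Pi.add_apply,
        Pi.smul_apply, smul_eq_mul]
      rw [Finset.sum_add_distrib, ← Finset.mul_sum, ← Finset.mul_sum, hp2 S, hq2 S]
    · simp only [Prod.snd_add, Prod.smul_snd, Pi.add_apply, Pi.smul_apply, smul_eq_mul]
      exact add_nonneg (mul_nonneg ha (hp3 U)) (mul_nonneg hb (hq3 U))
  -- every point of τ is a convex combination of the v T
  have hcomb : ∀ p ∈ τ, p = ∑ T, p.2 T • v T := by
    intro p hp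
    rw [hτ] at hp
    obtain ⟨hp1, hp2, hp3⟩ := hp
    have h2 : p.2 = (∑ T, p.2 T • v T).2 := by
      funext U
      simp only [Prod.snd_sum, Finset.sum_apply, Prod.smul_snd, Pi.smul_apply, hv,
        smul_eq_mul, mul_ite, mul_one, mul_zero]
      simp
    have h1 : p.1 = (∑ T, p.2 T • v T).1 := by
      funext S
      simp only [Prod.fst_sum, Finset.sum_apply, Prod.smul_fst, Pi.smul_apply, hv,
        smul_eq_mul, mul_ite, mul_one, mul_zero]
      rw [← hp2 S, Finset.sum_filter]
    exact Prod.ext h1 h2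
  have hconv : τ = convexHull ℚ (Set.range v) := by
    apply le_antisymm
    · intro p hp
      have := hcomb p hp
      rw [hτ] at hp
      obtain ⟨hp1, hp2, hp3⟩ := hp
      have hc : Finset.univ.centerMass p.2 v ∈ convexHull ℚ (Set.range v) :=
        Finset.centerMass_mem_convexHull _ (fun i _ => hp3 i) (by rw [hp1]; norm_num)
          (fun i _ => Set.mem_range_self i)
      rwa [Finset.centerMass, hp1, inv_one, one_smul, ← this] at hc
    · exact convexHull_min (Set.range_subset_iff.2 hvmem) hconvex
  -- v is affinely independent
  have hai : AffineIndependent ℚ v := by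
    rw [affineIndependent_iff]
    intro s w hw hsum e he
    have := congrFun (congrArg Prod.snd hsum) e
    simp only [Prod.snd_sum, Finset.sum_apply, Prod.smul_snd, Pi.smul_apply, hv,
      smul_eq_mul, mul_ite, mul_one, mul_zero, Prod.snd_zero, Pi.zero_apply] at this
    rwa [Finset.sum_ite_eq s e w, if_pos he] at this
  refine ⟨?_, hai, ?_⟩
  · apply le_antisymm
    · rw [hconv]
      exact extremePoints_convexHull_subset
    · rintro _ ⟨T, rfl⟩
      refine ⟨hvmem T, ?_⟩
      intro x hx y hy hseg
      obtain ⟨a, b, ha, hb, hab, habeq⟩ := hseg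
      -- the second coordinates of x and y must equal e^T
      have key : ∀ z : ({S // S ∈ F} → ℚ) × (Finset (Fin n) → ℚ), z ∈ τ →
          z.2 = (v T).2 → z = v T := by
        intro z hz h2
        have h1 := hcomb z hz
        have h1' := hcomb (v T) (hvmem T)
        rw [h1, h1', h2]
      have hx2 : ∀ z : ({S // S ∈ F} → ℚ) × (Finset (Fin n) → ℚ), z ∈ τ →
          (∀ U, U ≠ T → z.2 U = 0) → z.2 = (v T).2 := by
        intro z hz hU0
        rw [hτ] at hz
        funext U
        rw [hv]
        by_cases hUT : U = T
        · subst hUT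
          have := hz.1
          rw [Finset.sum_eq_single U (fun b _ hb => hU0 b hb) (by simp)] at this
          simp [this]
        · simp [hUT, hU0 U hUT]
      have hzero : ∀ U, U ≠ T → x.2 U = 0 ∧ y.2 U = 0 := by
        intro U hU
        have hxU : 0 ≤ x.2 U := by rw [hτ] at hx; exact hx.2.2 U
        have hyU : 0 ≤ y.2 U := by rw [hτ] at hy; exact hy.2.2 U
        have : a * x.2 U + b * y.2 U = 0 := by
          have h := congrFun (congrArg Prod.snd habeq) U
          rw [hv] at h
          simp only [Prod.snd_add, Prod.smul_snd, Pi.add_apply, Pi.smul_apply,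
            smul_eq_mul] at h
          simpa [hU] using h
        constructor
        · have h1 : a * x.2 U = 0 := by nlinarith [mul_nonneg ha.le hxU, mul_nonneg hb.le hyU]
          exact (mul_eq_zero.1 h1).resolve_left (ne_of_gt ha)
        · have h1 : b * y.2 U = 0 := by nlinarith [mul_nonneg ha.le hxU, mul_nonneg hb.le hyU]
          exact (mul_eq_zero.1 h1).resolve_left (ne_of_gt hb)
      exact key x hx (hx2 x hx fun U hU => (hzero U hU).1)
  · have hvs : vectorSpan ℚ τ = vectorSpan ℚ (Set.range v) := by
      rw [hconv, ← direction_affineSpan, affineSpan_convexHull, direction_affineSpan]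
    rw [hvs]
    apply hai.finrank_vectorSpan
    rw [Fintype.card_finset, Fintype.card_fin]
    exact (Nat.succ_pred_eq_of_pos (pow_pos (by norm_num) n)).symm
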